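/- Let E and F be normed L-spaces and f ∈ E*, g ∈ F* bounded functionals. Assume L carries a metric diamond operation ◇ : L × L → L (bilinear with ‖ξ ◇ η‖ = ‖ξ‖‖η‖). Then the bilinear functional f × g : E × F → ℂ, (x,y) ↦ f(x)g(y), is L-bounded with ‖(f × g)_∞‖ = ‖f‖·‖g‖, where (f × g)_∞ : (L ⊗ E) × (L ⊗ F) → L is determined by (ξ ⊗ x, η ⊗ y) ↦ f(x)g(y)(ξ ◇ η). -/

import Mathlib

open TensorProduct

section Aux

variable {L E : Type*} [NormedAddCommGroup L] [NormedSpace ℂ L]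
  [NormedAddCommGroup E] [NormedSpace ℂ E]

/-- The "slice" map `ξ ⊗ x ↦ f x • ξ`. -/
noncomputable def fInfAux (f : E →L[ℂ] ℂ) : L ⊗[ℂ] E →ₗ[ℂ] L :=
  (TensorProduct.rid ℂ L).toLinearMap ∘ₗ LinearMap.lTensor L (f : E →ₗ[ℂ] ℂ)

@[simp] lemma fInfAux_tmul (f : E →L[ℂ] ℂ) (ξ : L) (x : E) :
    fInfAux f (ξ ⊗ₜ[ℂ] x) = f x • ξ := by
  simp [fInfAux]

/-- The map `ξ ⊗ x ↦ φ ξ • x`. -/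
noncomputable def wMapAux (φ : L →L[ℂ] ℂ) : L ⊗[ℂ] E →ₗ[ℂ] E :=
  (TensorProduct.lid ℂ E).toLinearMap ∘ₗ LinearMap.rTensor E (φ : L →ₗ[ℂ] ℂ)

@[simp] lemma wMapAux_tmul (φ : L →L[ℂ] ℂ) (ξ : L) (x : E) :
    wMapAux φ (ξ ⊗ₜ[ℂ] x) = φ ξ • x := by
  simp [wMapAux]

lemma phi_fInfAux (f : E →L[ℂ] ℂ) (φ : L →L[ℂ] ℂ) (u : L ⊗[ℂ] E) :
    φ (fInfAux f u) = f (wMapAux φ u) := by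
  induction u using TensorProduct.induction_on with
  | zero => simp
  | tmul ξ x => simp [smul_eq_mul, mul_comm]
  | add u v hu hv => simp [map_add, hu, hv]

lemma rTensor_smulRight_aux (φ : L →L[ℂ] ℂ) (ξ₀ : L) (u : L ⊗[ℂ] E) :
    LinearMap.rTensor E ((φ.smulRight ξ₀ : L →L[ℂ] L) : L →ₗ[ℂ] L) u
      = ξ₀ ⊗ₜ[ℂ] (wMapAux φ u) := by
  induction u using TensorProduct.induction_on with
  | zero => simp
  | tmul ξ x =>
    simp only [LinearMap.rTensor_tmul, ContinuousLinearMap.coe_coe,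
      ContinuousLinearMap.smulRight_apply, wMapAux_tmul]
    rw [TensorProduct.smul_tmul]
  | add u v hu hv => simp only [map_add, hu, hv, TensorProduct.tmul_add]

lemma N_nonneg_aux (N : L ⊗[ℂ] E → ℝ)
    (h0 : N 0 = 0)
    (hadd : ∀ u v, N (u + v) ≤ N u + N v)
    (hsmul : ∀ (c : ℂ) u, N (c • u) = ‖c‖ * N u) (u : L ⊗[ℂ] E) : 0 ≤ N u := by
  have h := hadd u (-u)
  have hneg : N (-u) = N u := by
    have := hsmul (-1) u
    simpa using this
  rw [add_neg_cancel, h0, hneg] at h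
  linarith

lemma fInfAux_le (f : E →L[ℂ] ℂ) (N : L ⊗[ℂ] E → ℝ)
    (hnn : ∀ u, 0 ≤ N u)
    (hcontr : ∀ (a : L →L[ℂ] L) u,
      N (LinearMap.rTensor E (a : L →ₗ[ℂ] L) u) ≤ ‖a‖ * N u)
    (hund : ∀ (ξ : L) (x : E), ‖ξ‖ = 1 → N (ξ ⊗ₜ[ℂ] x) = ‖x‖)
    (ξ₀ : L) (hξ₀ : ‖ξ₀‖ = 1) (u : L ⊗[ℂ] E) :
    ‖fInfAux f u‖ ≤ ‖f‖ * N u := by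
  by_cases h : fInfAux f u = 0
  · rw [h, norm_zero]
    have := hnn u
    positivity
  · obtain ⟨φ, hφ1, hφ⟩ := exists_dual_vector ℂ (fInfAux f u) (norm_ne_zero_iff.mpr h)
    have h1 : ‖fInfAux f u‖ = ‖φ (fInfAux f u)‖ := by
      rw [hφ]
      simp [Complex.norm_real, abs_of_nonneg (norm_nonneg _)]
    rw [h1, phi_fInfAux]
    have hsm : ‖(φ.smulRight ξ₀ : L →L[ℂ] L)‖ = 1 := by
      rw [ContinuousLinearMap.norm_smulRight_apply, hφ1, hξ₀, one_mul]
    calc ‖f (wMapAux φ u)‖ ≤ ‖f‖ * ‖wMapAux φ u‖ := f.le_opNorm _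
      _ = ‖f‖ * N (ξ₀ ⊗ₜ[ℂ] wMapAux φ u) := by rw [hund _ _ hξ₀]
      _ = ‖f‖ * N (LinearMap.rTensor E
            ((φ.smulRight ξ₀ : L →L[ℂ] L) : L →ₗ[ℂ] L) u) := by
            rw [rTensor_smulRight_aux]
      _ ≤ ‖f‖ * (‖(φ.smulRight ξ₀ : L →L[ℂ] L)‖ * N u) :=
            mul_le_mul_of_nonneg_left (hcontr _ _) (norm_nonneg f)
      _ = ‖f‖ * N u := by rw [hsm, one_mul]

end Aux

/-- For normed `L`-spaces `E, F` (with a metric diamond operation on `L`)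
and bounded functionals `f, g`, the bilinear functional `f × g` is `L`-bounded with
`‖(f × g)_∞‖ = ‖f‖ * ‖g‖` (stated as: `‖f‖‖g‖` is the least bound). -/
theorem bilinear_functional_L_bounded
    (L E F : Type*) [NormedAddCommGroup L] [NormedSpace ℂ L] [Nontrivial L]
    [NormedAddCommGroup E] [NormedSpace ℂ E]
    [NormedAddCommGroup F] [NormedSpace ℂ F]
    -- the metric diamond operation
    (d : L →ₗ[ℂ] L →ₗ[ℂ] L) (hd : ∀ ξ η : L, ‖d ξ η‖ = ‖ξ‖ * ‖η‖)
    -- the L-norms on E and F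
    (NE : L ⊗[ℂ] E → ℝ) (NF : L ⊗[ℂ] F → ℝ)
    (hNE0 : ∀ u, NE u = 0 ↔ u = 0)
    (hNEadd : ∀ u v, NE (u + v) ≤ NE u + NE v)
    (hNEsmul : ∀ (c : ℂ) u, NE (c • u) = ‖c‖ * NE u)
    (hNEcontr : ∀ (a : L →L[ℂ] L) u,
      NE (LinearMap.rTensor E (a : L →ₗ[ℂ] L) u) ≤ ‖a‖ * NE u)
    (hNEund : ∀ (ξ : L) (x : E), ‖ξ‖ = 1 → NE (ξ ⊗ₜ[ℂ] x) = ‖x‖)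
    (hNF0 : ∀ v, NF v = 0 ↔ v = 0)
    (hNFadd : ∀ u v, NF (u + v) ≤ NF u + NF v)
    (hNFsmul : ∀ (c : ℂ) v, NF (c • v) = ‖c‖ * NF v)
    (hNFcontr : ∀ (a : L →L[ℂ] L) v,
      NF (LinearMap.rTensor F (a : L →ₗ[ℂ] L) v) ≤ ‖a‖ * NF v)
    (hNFund : ∀ (ξ : L) (y : F), ‖ξ‖ = 1 → NF (ξ ⊗ₜ[ℂ] y) = ‖y‖)
    (f : E →L[ℂ] ℂ) (g : F →L[ℂ] ℂ)
    -- the amplification of f × g, determined on elementary tensors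
    (amp : L ⊗[ℂ] E →ₗ[ℂ] L ⊗[ℂ] F →ₗ[ℂ] L)
    (hamp : ∀ (ξ η : L) (x : E) (y : F),
      amp (ξ ⊗ₜ[ℂ] x) (η ⊗ₜ[ℂ] y) = (f x * g y) • d ξ η) :
    (∀ (u : L ⊗[ℂ] E) (v : L ⊗[ℂ] F), ‖amp u v‖ ≤ (‖f‖ * ‖g‖) * (NE u * NF v)) ∧
    (∀ C : ℝ, 0 ≤ C →
      (∀ (u : L ⊗[ℂ] E) (v : L ⊗[ℂ] F), ‖amp u v‖ ≤ C * (NE u * NF v)) →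
      ‖f‖ * ‖g‖ ≤ C) := by
  -- a unit vector in L
  obtain ⟨z, hz⟩ := exists_ne (0 : L)
  set ξ₀ : L := ((‖z‖⁻¹ : ℝ) : ℂ) • z with hξ₀def
  have hξ₀ : ‖ξ₀‖ = 1 := by
    rw [hξ₀def, norm_smul]
    simp only [Complex.norm_real, norm_inv, norm_norm]
    exact inv_mul_cancel₀ (norm_ne_zero_iff.mpr hz)
  have hNEnn : ∀ u, 0 ≤ NE u :=
    N_nonneg_aux NE ((hNE0 0).mpr rfl) hNEadd hNEsmul
  have hNFnn : ∀ v, 0 ≤ NF v :=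
    N_nonneg_aux NF ((hNF0 0).mpr rfl) hNFadd hNFsmul
  -- amp factors through the slice maps
  have hfact : ∀ (u : L ⊗[ℂ] E) (v : L ⊗[ℂ] F),
      amp u v = d (fInfAux f u) (fInfAux g v) := by
    intro u v
    induction u using TensorProduct.induction_on with
    | zero => simp
    | tmul ξ x =>
      induction v using TensorProduct.induction_on with
      | zero => simp
      | tmul η y =>
        rw [hamp]
        simp [map_smul, smul_smul, mul_comm]
      | add v w hv hw => simp [map_add, hv, hw]
    | add u w hu hw => simp [map_add, hu, hw]
  constructor
  · intro u v
    rw [hfact, hd]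
    have h1 := fInfAux_le f NE hNEnn hNEcontr hNEund ξ₀ hξ₀ u
    have h2 := fInfAux_le g NF hNFnn hNFcontr hNFund ξ₀ hξ₀ v
    calc ‖fInfAux f u‖ * ‖fInfAux g v‖
        ≤ (‖f‖ * NE u) * (‖g‖ * NF v) :=
          mul_le_mul h1 h2 (norm_nonneg _)
            (by have := hNEnn u; positivity)
      _ = (‖f‖ * ‖g‖) * (NE u * NF v) := by ring
  · intro C hC hbound
    -- evaluate on elementary tensors with ξ₀
    have hb : ∀ (x : E) (y : F), ‖f x‖ * ‖g y‖ ≤ C * (‖x‖ * ‖y‖) := by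
      intro x y
      have := hbound (ξ₀ ⊗ₜ[ℂ] x) (ξ₀ ⊗ₜ[ℂ] y)
      rw [hamp, norm_smul, hd, hξ₀, hNEund _ _ hξ₀, hNFund _ _ hξ₀] at this
      simpa [norm_mul] using this
    have step : ∀ y : F, ‖f‖ * ‖g y‖ ≤ C * ‖y‖ := by
      intro y
      rcases eq_or_ne (g y) 0 with hgy | hgy
      · rw [hgy, norm_zero, mul_zero]
        positivity
      · have hgy' : (0 : ℝ) < ‖g y‖ := norm_pos_iff.mpr hgy
        have hfle : ‖f‖ ≤ C * ‖y‖ / ‖g y‖ := by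
          apply f.opNorm_le_bound (by positivity)
          intro x
          rw [div_mul_eq_mul_div, le_div_iff₀ hgy']
          have := hb x y
          nlinarith
        calc ‖f‖ * ‖g y‖ ≤ (C * ‖y‖ / ‖g y‖) * ‖g y‖ :=
              mul_le_mul_of_nonneg_right hfle (norm_nonneg _)
          _ = C * ‖y‖ := div_mul_cancel₀ _ (ne_of_gt hgy')
    rcases eq_or_lt_of_le (norm_nonneg f) with hf0 | hf0
    · rw [← hf0, zero_mul]; exact hC
    · have hgle : ‖g‖ ≤ C / ‖f‖ := by
        apply g.opNorm_le_bound (by positivity)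
        intro y
        rw [div_mul_eq_mul_div, le_div_iff₀ hf0]
        have := step y
        nlinarith
      calc ‖f‖ * ‖g‖ ≤ ‖f‖ * (C / ‖f‖) :=
            mul_le_mul_of_nonneg_left hgle (norm_nonneg _)
        _ = C := by rw [mul_comm, div_mul_cancel₀ C (ne_of_gt hf0)]
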